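/- arXiv:2210.05707 — 4 statements merged into one kernel-verified Lean document; each statement's English description precedes it below -/
import Mathlib

section
/- For any matrix A ∈ ℂ^{K×K} and any binary matrix M ∈ {0,1}^{K×K}, there exists a permutation ρ of {1, …, K} such that |det((P_ρ A) ⊙ M)| ≥ |G_M| · |det(A)| / K!. -/
noncomputable section

/-- The permutation matrix `P_ρ` with `(P_ρ)_{k,ℓ} = 1` iff `ℓ = ρ(k)`, so that the
`k`-th row of `P_ρ * A` is the `ρ(k)`-th row of `A`. -/
def permMat {K : ℕ} (ρ : Equiv.Perm (Fin K)) : Matrix (Fin K) (Fin K) ℂ :=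
  Matrix.of fun k l => if l = ρ k then 1 else 0

lemma permMat_mul_apply {K : ℕ} (ρ : Equiv.Perm (Fin K)) (A : Matrix (Fin K) (Fin K) ℂ)
    (k l : Fin K) : (permMat ρ * A) k l = A (ρ k) l := by
  simp [Matrix.mul_apply, permMat, Matrix.of_apply, ite_mul]

lemma key_sum (K : ℕ) (A M : Matrix (Fin K) (Fin K) ℂ)
    (hM : ∀ k l, M k l = 0 ∨ M k l = 1) :
    ∑ ρ : Equiv.Perm (Fin K),
        ((Equiv.Perm.sign ρ : ℤ) : ℂ) * (Matrix.hadamard (permMat ρ * A) M).det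
      = ((Finset.univ.filter fun σ : Equiv.Perm (Fin K) => ∀ k, M k (σ k) = 1).card : ℂ)
          * A.det := by
  have hdet : ∀ ρ : Equiv.Perm (Fin K),
      (Matrix.hadamard (permMat ρ * A) M).det
        = ∑ σ : Equiv.Perm (Fin K), ((Equiv.Perm.sign σ : ℤ) : ℂ)
            * ((∏ i, A (ρ i) (σ i)) * ∏ i, M i (σ i)) := by
    intro ρ
    rw [← Matrix.det_transpose, Matrix.det_apply']
    refine Finset.sum_congr rfl fun σ _ => ?_
    rw [← Finset.prod_mul_distrib]
    congr 1
    refine Finset.prod_congr rfl fun i _ => ?_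
    simp [Matrix.hadamard, Matrix.transpose_apply, permMat_mul_apply]
  have hprodM : ∀ σ : Equiv.Perm (Fin K),
      (∏ i, M i (σ i)) = if (∀ k, M k (σ k) = 1) then (1 : ℂ) else 0 := by
    intro σ
    by_cases h : ∀ k, M k (σ k) = 1
    · simp [h]
    · rw [if_neg h]
      push_neg at h
      obtain ⟨k, hk⟩ := h
      refine Finset.prod_eq_zero (Finset.mem_univ k) ?_
      rcases hM k (σ k) with h0 | h1
      · exact h0
      · exact absurd h1 hk
  have hinner : ∀ σ : Equiv.Perm (Fin K),
      ∑ ρ : Equiv.Perm (Fin K),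
        ((Equiv.Perm.sign ρ : ℤ) : ℂ) * ((Equiv.Perm.sign σ : ℤ) : ℂ)
          * ∏ i, A (ρ i) (σ i) = A.det := by
    intro σ
    have hre := Equiv.sum_comp (Equiv.mulRight σ)
      (fun ρ : Equiv.Perm (Fin K) =>
        ((Equiv.Perm.sign ρ : ℤ) : ℂ) * ((Equiv.Perm.sign σ : ℤ) : ℂ)
          * ∏ i, A (ρ i) (σ i))
    rw [← hre]
    simp only [Equiv.coe_mulRight] at *
    have : ∀ ρ : Equiv.Perm (Fin K),
        ((Equiv.Perm.sign (ρ * σ) : ℤ) : ℂ) * ((Equiv.Perm.sign σ : ℤ) : ℂ)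
          * ∏ i, A ((ρ * σ) i) (σ i)
        = ((Equiv.Perm.sign ρ : ℤ) : ℂ) * ∏ i, A (ρ i) i := by
      intro ρ
      have hsign : ((Equiv.Perm.sign (ρ * σ) : ℤ) : ℂ) * ((Equiv.Perm.sign σ : ℤ) : ℂ)
          = ((Equiv.Perm.sign ρ : ℤ) : ℂ) := by
        rw [Equiv.Perm.sign_mul]
        push_cast
        rcases Int.units_eq_one_or (Equiv.Perm.sign σ) with h | h <;> simp [h]
      have hprod : (∏ i, A ((ρ * σ) i) (σ i)) = ∏ i, A (ρ i) i := by
        have := Equiv.prod_comp σ (fun j => A (ρ j) j)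
        simpa using this
      rw [hsign, hprod]
    rw [Finset.sum_congr rfl fun ρ _ => this ρ]
    rw [Matrix.det_apply']
  calc ∑ ρ : Equiv.Perm (Fin K),
        ((Equiv.Perm.sign ρ : ℤ) : ℂ) * (Matrix.hadamard (permMat ρ * A) M).det
      = ∑ ρ : Equiv.Perm (Fin K), ∑ σ : Equiv.Perm (Fin K),
          (if (∀ k, M k (σ k) = 1) then (1 : ℂ) else 0)
            * (((Equiv.Perm.sign ρ : ℤ) : ℂ) * ((Equiv.Perm.sign σ : ℤ) : ℂ)
              * ∏ i, A (ρ i) (σ i)) := by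
        refine Finset.sum_congr rfl fun ρ _ => ?_
        rw [hdet ρ, Finset.mul_sum]
        refine Finset.sum_congr rfl fun σ _ => ?_
        rw [hprodM σ]; ring
    _ = ∑ σ : Equiv.Perm (Fin K),
          (if (∀ k, M k (σ k) = 1) then (1 : ℂ) else 0)
            * ∑ ρ : Equiv.Perm (Fin K),
              ((Equiv.Perm.sign ρ : ℤ) : ℂ) * ((Equiv.Perm.sign σ : ℤ) : ℂ)
                * ∏ i, A (ρ i) (σ i) := by
        rw [Finset.sum_comm]
        exact Finset.sum_congr rfl fun σ _ => (Finset.mul_sum _ _ _).symm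
    _ = ∑ σ : Equiv.Perm (Fin K),
          (if (∀ k, M k (σ k) = 1) then (1 : ℂ) else 0) * A.det := by
        exact Finset.sum_congr rfl fun σ _ => by rw [hinner σ]
    _ = ((Finset.univ.filter fun σ : Equiv.Perm (Fin K) => ∀ k, M k (σ k) = 1).card : ℂ)
          * A.det := by
        rw [← Finset.sum_mul]
        congr 1
        simp [Finset.sum_boole]

/-- For any `A ∈ ℂ^{K×K}` and any binary matrix `M ∈ {0,1}^{K×K}`, there
is a permutation `ρ` with `|det((P_ρ A) ⊙ M)| ≥ |G_M| · |det A| / K!`, where `G_M` is the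
set of permutations `σ` with `M_{k,σ(k)} = 1` for all `k`. -/
theorem stmt_2 (K : ℕ) (A M : Matrix (Fin K) (Fin K) ℂ)
    (hM : ∀ k l, M k l = 0 ∨ M k l = 1) :
    ∃ ρ : Equiv.Perm (Fin K),
      ((Finset.univ.filter fun σ : Equiv.Perm (Fin K) => ∀ k, M k (σ k) = 1).card : ℝ)
          * ‖A.det‖ / (Nat.factorial K : ℝ)
        ≤ ‖(Matrix.hadamard (permMat ρ * A) M).det‖ := by
  set c : ℕ := (Finset.univ.filter fun σ : Equiv.Perm (Fin K) => ∀ k, M k (σ k) = 1).card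
  have hkey := key_sum K A M hM
  have habs : (c : ℝ) * ‖A.det‖
      ≤ ∑ ρ : Equiv.Perm (Fin K),
          ‖(Matrix.hadamard (permMat ρ * A) M).det‖ := by
    have h1 : (c : ℝ) * ‖A.det‖
        = ‖∑ ρ : Equiv.Perm (Fin K),
            ((Equiv.Perm.sign ρ : ℤ) : ℂ) * (Matrix.hadamard (permMat ρ * A) M).det‖ := by
      rw [hkey, norm_mul]
      simp [c]
    rw [h1]
    refine le_trans (norm_sum_le _ _) ?_
    refine Finset.sum_le_sum fun ρ _ => ?_
    rw [norm_mul]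
    have : ‖((Equiv.Perm.sign ρ : ℤ) : ℂ)‖ = 1 := by
      rcases Int.units_eq_one_or (Equiv.Perm.sign ρ) with h | h <;> simp [h]
    rw [this, one_mul]
  have hcard : (Finset.univ : Finset (Equiv.Perm (Fin K))).card = Nat.factorial K := by
    simp [Fintype.card_perm]
  have hne : (Finset.univ : Finset (Equiv.Perm (Fin K))).Nonempty := Finset.univ_nonempty
  have hsum : ∑ _ρ : Equiv.Perm (Fin K),
      (c : ℝ) * ‖A.det‖ / (Nat.factorial K : ℝ)
      ≤ ∑ ρ : Equiv.Perm (Fin K),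
          ‖(Matrix.hadamard (permMat ρ * A) M).det‖ := by
    rw [Finset.sum_const, hcard, nsmul_eq_mul]
    have hfac : (Nat.factorial K : ℝ) ≠ 0 := by positivity
    rw [show (Nat.factorial K : ℝ) * ((c : ℝ) * ‖A.det‖ / (Nat.factorial K : ℝ))
        = (c : ℝ) * ‖A.det‖ from by field_simp]
    exact habs
  obtain ⟨ρ, _, hρ⟩ := Finset.exists_le_of_sum_le hne hsum
  exact ⟨ρ, hρ⟩
end
end

section
/- If A ∈ ℂ^{K×K} is nonsingular and M ∈ {0,1}^{K×K} has at least one generalized diagonal of ones (i.e., there exists a permutation σ of {1,…,K} with M_{k,σ(k)} = 1 for all k), then there exists a permutation ρ of {1, …, K} such that det((P_ρ A) ⊙ M) ≠ 0. -/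
noncomputable section

lemma permMat_mul {K : ℕ} (ρ : Equiv.Perm (Fin K)) (A : Matrix (Fin K) (Fin K) ℂ) :
    permMat ρ * A = A.submatrix ρ id := by
  ext k l
  simp [Matrix.mul_apply, permMat]

lemma sign_sq {K : ℕ} (π : Equiv.Perm (Fin K)) :
    ((Equiv.Perm.sign π : ℤ) : ℂ) * ((Equiv.Perm.sign π : ℤ) : ℂ) = 1 := by
  rcases Int.units_eq_one_or (Equiv.Perm.sign π) with h | h <;> simp [h]

/-- If `A ∈ ℂ^{K×K}` is nonsingular and the binary matrix
`M ∈ {0,1}^{K×K}` has a generalized diagonal of ones, then there is a permutation `ρ`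
with `det((P_ρ A) ⊙ M) ≠ 0`. -/
theorem stmt_3 (K : ℕ) (A M : Matrix (Fin K) (Fin K) ℂ)
    (hA : A.det ≠ 0)
    (hM : ∀ k l, M k l = 0 ∨ M k l = 1)
    (hdiag : ∃ σ : Equiv.Perm (Fin K), ∀ k, M k (σ k) = 1) :
    ∃ ρ : Equiv.Perm (Fin K), (Matrix.hadamard (permMat ρ * A) M).det ≠ 0 := by
  classical
  obtain ⟨σ, hσ⟩ := hdiag
  by_contra h
  push_neg at h
  have hS : (∑ ρ : Equiv.Perm (Fin K),
      ((Equiv.Perm.sign ρ : ℤ) : ℂ) * (Matrix.hadamard (permMat ρ * A) M).det) = 0 := by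
    simp [h]
  have key : (∑ ρ : Equiv.Perm (Fin K),
      ((Equiv.Perm.sign ρ : ℤ) : ℂ) * (Matrix.hadamard (permMat ρ * A) M).det)
      = A.det * ∑ π : Equiv.Perm (Fin K), ∏ i, M (π i) i := by
    have step1 : ∀ ρ : Equiv.Perm (Fin K),
        (Matrix.hadamard (permMat ρ * A) M).det
        = ∑ π : Equiv.Perm (Fin K), ((Equiv.Perm.sign π : ℤ) : ℂ) *
            ∏ i, (A (ρ (π i)) i * M (π i) i) := by
      intro ρ
      rw [permMat_mul, Matrix.det_apply']
      simp [Matrix.hadamard, Matrix.submatrix]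
    calc (∑ ρ : Equiv.Perm (Fin K),
        ((Equiv.Perm.sign ρ : ℤ) : ℂ) * (Matrix.hadamard (permMat ρ * A) M).det)
        = ∑ ρ : Equiv.Perm (Fin K), ∑ π : Equiv.Perm (Fin K),
            ((Equiv.Perm.sign ρ : ℤ) : ℂ) * (((Equiv.Perm.sign π : ℤ) : ℂ) *
              ∏ i, (A (ρ (π i)) i * M (π i) i)) := by
          simp_rw [step1, Finset.mul_sum]
      _ = ∑ π : Equiv.Perm (Fin K), ∑ ρ : Equiv.Perm (Fin K),
            ((Equiv.Perm.sign ρ : ℤ) : ℂ) * (((Equiv.Perm.sign π : ℤ) : ℂ) *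
              ∏ i, (A (ρ (π i)) i * M (π i) i)) := Finset.sum_comm
      _ = ∑ π : Equiv.Perm (Fin K), ∑ τ : Equiv.Perm (Fin K),
            ((Equiv.Perm.sign (τ * π⁻¹) : ℤ) : ℂ) * (((Equiv.Perm.sign π : ℤ) : ℂ) *
              ∏ i, (A (τ i) i * M (π i) i)) := by
          refine Finset.sum_congr rfl fun π _ => ?_
          refine (Fintype.sum_equiv (Equiv.mulRight π⁻¹) _ _ fun τ => ?_).symm
          simp [Equiv.Perm.mul_apply]
      _ = ∑ π : Equiv.Perm (Fin K), (∏ i, M (π i) i) * A.det := by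
          refine Finset.sum_congr rfl fun π _ => ?_
          rw [Matrix.det_apply', Finset.mul_sum]
          refine Finset.sum_congr rfl fun τ _ => ?_
          rw [Finset.prod_mul_distrib]
          have hsgn : ((Equiv.Perm.sign (τ * π⁻¹) : ℤ) : ℂ)
              = ((Equiv.Perm.sign τ : ℤ) : ℂ) * ((Equiv.Perm.sign π : ℤ) : ℂ) := by
            rw [map_mul]
            push_cast
            simp
          rw [hsgn]
          linear_combination ((Equiv.Perm.sign τ : ℤ) : ℂ) * (∏ i, A (τ i) i) *
            (∏ i, M (π i) i) * sign_sq π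
      _ = A.det * ∑ π : Equiv.Perm (Fin K), ∏ i, M (π i) i := by
          rw [← Finset.sum_mul, mul_comm]
  have hN : (∑ π : Equiv.Perm (Fin K), ∏ i, M (π i) i) ≠ 0 := by
    have hcast : (∑ π : Equiv.Perm (Fin K), ∏ i, M (π i) i)
        = ((∑ π : Equiv.Perm (Fin K), ∏ i, (if M (π i) i = 1 then 1 else 0 : ℕ) : ℕ) : ℂ) := by
      push_cast
      refine Finset.sum_congr rfl fun π _ => Finset.prod_congr rfl fun i _ => ?_
      rcases hM (π i) i with h0 | h1
      · rw [h0]; norm_num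
      · simp [h1]
    rw [hcast, Nat.cast_ne_zero]
    intro hzero
    rw [Finset.sum_eq_zero_iff] at hzero
    have := hzero σ⁻¹ (Finset.mem_univ _)
    rw [Finset.prod_eq_zero_iff] at this
    obtain ⟨i, _, hi⟩ := this
    have hMi : M (σ⁻¹ i) i = 1 := by
      have := hσ (σ⁻¹ i); simpa using this
    simp [hMi] at hi
    exact hi (by simpa using hMi)
  rw [hS] at key
  exact (mul_ne_zero hA hN) key.symm
end
end

section
/- Let I_1, I_2 be nonempty intervals partitioning [0,1), and let Λ_1, Λ_2 be disjoint subsets of ℤ with Λ_1 ∪ Λ_2 = ℤ such that for each k = 1,2 the system E(I_k, Λ_k) is a Riesz basis for L²(I_k). For each k = 1,2 let 𝓛_k ⊆ {1,2} with k ∈ 𝓛_k and set S_k = ⋃_{n∈𝓛_k} I_n. Then the family E(S_1, Λ_1) ∪ E(S_2, Λ_2), indexed by pairs (k, λ) with λ ∈ Λ_k, is a Riesz basis for L²[0,1). -/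
open MeasureTheory Complex Real Set
open scoped Classical

noncomputable section

/-- Lebesgue measure restricted to `[0,1)`. -/
def μ01 : MeasureTheory.Measure ℝ := MeasureTheory.volume.restrict (Set.Ico (0:ℝ) 1)

/-- The Hilbert space `L²[0,1)` of complex square-integrable functions on `[0,1)`. -/
abbrev L2 : Type := MeasureTheory.Lp ℂ 2 μ01

/-- A function on ℝ as an element of `L²[0,1)` (junk value `0` if not in `L²`). -/
def toL2 (f : ℝ → ℂ) : L2 :=
  if h : MeasureTheory.MemLp f 2 μ01 then h.toLp f else 0

/-- The function `x ↦ e^{2πiλx} · χ_S(x)` as an element of `L²[0,1)`. -/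
def expChar (S : Set ℝ) (lam : ℝ) : L2 :=
  toL2 (S.indicator fun x => Complex.exp (2 * Real.pi * lam * x * Complex.I))

/-- `L²(S)` viewed as the subset of `L²[0,1)` of elements vanishing a.e. outside `S`. -/
def L2on (S : Set ℝ) : Set L2 := {g : L2 | ∀ᵐ x ∂μ01, x ∉ S → g x = 0}

/-- A family is a Riesz sequence: there are `0 < A ≤ B` giving a two-sided ℓ²-norm
equivalence on (finite) linear combinations. -/
def IsRieszSequence {ι : Type*} (f : ι → L2) : Prop :=
  ∃ A B : ℝ, 0 < A ∧ A ≤ B ∧ ∀ c : ι →₀ ℂ,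
    A * ∑ i ∈ c.support, ‖c i‖ ^ 2 ≤ ‖∑ i ∈ c.support, c i • f i‖ ^ 2 ∧
    ‖∑ i ∈ c.support, c i • f i‖ ^ 2 ≤ B * ∑ i ∈ c.support, ‖c i‖ ^ 2

/-- A family is a Riesz basis for the subspace of `L²[0,1)` given by the subset `V`:
it is a Riesz sequence whose closed linear span is `V`. -/
def IsRieszBasis {ι : Type*} (f : ι → L2) (V : Set L2) : Prop :=
  IsRieszSequence f ∧ closure (↑(Submodule.span ℂ (Set.range f)) : Set L2) = V

instance : IsFiniteMeasure μ01 := by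
  constructor
  rw [μ01, Measure.restrict_apply_univ, Real.volume_Ico]
  norm_num

lemma expfun_memℒp (S : Set ℝ) (hS : MeasurableSet S) (lam : ℝ) :
    MemLp (S.indicator fun x => Complex.exp (2 * Real.pi * lam * x * Complex.I)) 2 μ01 := by
  refine MemLp.of_bound ?_ 1 ?_
  · exact (((Complex.continuous_exp.comp (by continuity)).stronglyMeasurable).indicator hS).aestronglyMeasurable
  · refine Filter.Eventually.of_forall fun x => ?_
    rw [Set.indicator_apply]
    split_ifs with h
    · rw [Complex.norm_exp]
      have : (2 * ↑Real.pi * ↑lam * ↑x * Complex.I).re = 0 := by simp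
      rw [this, Real.exp_zero]
    · simp

lemma expChar_coeFn (S : Set ℝ) (hS : MeasurableSet S) (lam : ℝ) :
    expChar S lam =ᵐ[μ01] (S.indicator fun x => Complex.exp (2 * Real.pi * lam * x * Complex.I)) := by
  rw [expChar, toL2, dif_pos (expfun_memℒp S hS lam)]
  exact MemLp.coeFn_toLp _

lemma expChar_mem_L2on (S : Set ℝ) (hS : MeasurableSet S) (lam : ℝ) :
    expChar S lam ∈ L2on S := by
  filter_upwards [expChar_coeFn S hS lam] with x hx hxS
  rw [hx, Set.indicator_of_notMem hxS]


-- union additivity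
lemma expChar_union (S T : Set ℝ) (hS : MeasurableSet S) (hT : MeasurableSet T)
    (h : Disjoint S T) (lam : ℝ) :
    expChar (S ∪ T) lam = expChar S lam + expChar T lam := by
  have hST : MeasurableSet (S ∪ T) := hS.union hT
  apply MeasureTheory.Lp.ext (p := (2:ENNReal)) (μ := μ01)
  filter_upwards [expChar_coeFn _ hST lam, expChar_coeFn S hS lam, expChar_coeFn T hT lam,
    MeasureTheory.Lp.coeFn_add (expChar S lam) (expChar T lam)] with x h1 h2 h3 h4
  rw [h1, h4, Pi.add_apply, h2, h3, Set.indicator_union_of_disjoint h]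

-- L2on is closed under zero, add, smul, sums
lemma L2on.zero_mem (S : Set ℝ) : (0 : L2) ∈ L2on S := by
  filter_upwards [MeasureTheory.Lp.coeFn_zero ℂ 2 μ01] with x hx _
  exact hx

lemma L2on.add_mem {S : Set ℝ} {f g : L2} (hf : f ∈ L2on S) (hg : g ∈ L2on S) :
    f + g ∈ L2on S := by
  filter_upwards [hf, hg, MeasureTheory.Lp.coeFn_add f g] with x h1 h2 h3 hxS
  rw [h3, Pi.add_apply, h1 hxS, h2 hxS, add_zero]

lemma L2on.smul_mem {S : Set ℝ} {f : L2} (c : ℂ) (hf : f ∈ L2on S) : c • f ∈ L2on S := by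
  filter_upwards [hf, MeasureTheory.Lp.coeFn_smul c f] with x h1 h2 hxS
  rw [h2, Pi.smul_apply, h1 hxS, smul_zero]

lemma L2on.sum_mem {S : Set ℝ} {ι : Type*} (s : Finset ι) (f : ι → L2)
    (hf : ∀ i ∈ s, f i ∈ L2on S) : ∑ i ∈ s, f i ∈ L2on S := by
  classical
  induction s using Finset.induction_on with
  | empty => simpa using L2on.zero_mem S
  | @insert a s' hx ih =>
      rw [Finset.sum_insert hx]
      exact L2on.add_mem (hf a (Finset.mem_insert_self a s'))
        (ih fun i hi => hf i (Finset.mem_insert_of_mem hi))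

-- orthogonality
lemma inner_zero_of_disjoint {S T : Set ℝ} (h : Disjoint S T) {f g : L2}
    (hf : f ∈ L2on S) (hg : g ∈ L2on T) : inner (𝕜 := ℂ) f g = 0 := by
  rw [MeasureTheory.L2.inner_def]
  rw [← integral_zero ℝ ℂ]
  apply integral_congr_ae
  filter_upwards [hf, hg] with x h1 h2
  by_cases hxS : x ∈ S
  · have : g x = 0 := h2 (Set.disjoint_left.mp h hxS)
    simp [this]
  · have : f x = 0 := h1 hxS
    simp [this]

lemma norm_add_sq_of_disjoint {S T : Set ℝ} (h : Disjoint S T) {f g : L2}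
    (hf : f ∈ L2on S) (hg : g ∈ L2on T) : ‖f + g‖^2 = ‖f‖^2 + ‖g‖^2 := by
  have h0 : inner (𝕜 := ℂ) f g = 0 := inner_zero_of_disjoint h hf hg
  have := @norm_add_sq ℂ _ _ _ _ f g
  rw [h0] at this
  simpa using this


instance fact01 : Fact ((0:ℝ) < 1) := ⟨one_pos⟩

def eFull (n : ℤ) : L2 := expChar (Set.Ico 0 1) (n : ℝ)

lemma μ01_eq_Ioc : μ01 = MeasureTheory.volume.restrict (Set.Ioc (0:ℝ) 1) :=
  Measure.restrict_congr_set Ico_ae_eq_Ioc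

lemma haar1_eq : (AddCircle.haarAddCircle : Measure (AddCircle (1:ℝ))) = volume := by
  rw [AddCircle.volume_eq_smul_haarAddCircle]
  simp

lemma hmp : MeasurePreserving ((↑) : ℝ → AddCircle (1:ℝ)) μ01 AddCircle.haarAddCircle := by
  rw [μ01_eq_Ioc, haar1_eq]
  simpa using AddCircle.measurePreserving_mk (1:ℝ) 0

/-- Composition with the quotient map as a linear isometry `L²(circle) → L²[0,1)`. -/
def U : Lp ℂ 2 (AddCircle.haarAddCircle (T := 1)) →ₗᵢ[ℂ] L2 :=
  MeasureTheory.Lp.compMeasurePreservingₗᵢ ℂ _ hmp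

lemma U_coeFn (g : Lp ℂ 2 (AddCircle.haarAddCircle (T := 1))) :
    U g =ᵐ[μ01] (fun x => g (↑x : AddCircle (1:ℝ))) :=
  MeasureTheory.Lp.coeFn_compMeasurePreserving g hmp

lemma U_fourier (n : ℤ) : U (fourierLp 2 n) = eFull n := by
  apply MeasureTheory.Lp.ext (p := (2:ENNReal)) (μ := μ01)
  have h1 : (fun x : ℝ => (fourierLp (T := 1) 2 n) (↑x : AddCircle (1:ℝ)))
      =ᵐ[μ01] (fun x : ℝ => fourier n (↑x : AddCircle (1:ℝ))) :=
    hmp.quasiMeasurePreserving.ae_eq_comp (coeFn_fourierLp 2 n)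
  have h2 : ∀ᵐ x ∂μ01, x ∈ Set.Ico (0:ℝ) 1 := by
    rw [μ01]; exact ae_restrict_mem measurableSet_Ico
  filter_upwards [U_coeFn (fourierLp 2 n), h1, h2,
    expChar_coeFn (Set.Ico 0 1) measurableSet_Ico (n : ℝ)] with x hx h1x h2x hex
  rw [eFull, hex, Set.indicator_of_mem h2x, hx, h1x, fourier_coe_apply]
  congr 1
  push_cast
  ring

set_option maxHeartbeats 1000000 in
set_option maxHeartbeats 400000 in
lemma U_surjective : ∀ f : L2, ∃ g : Lp ℂ 2 (AddCircle.haarAddCircle (T := (1:ℝ))), U g = f := by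
  intro f
  obtain ⟨h, hmeas, hae⟩ : ∃ h : ℝ → ℂ, StronglyMeasurable h ∧ ⇑f =ᵐ[μ01] h :=
    ⟨(MeasureTheory.Lp.aestronglyMeasurable f).mk _,
      (MeasureTheory.Lp.aestronglyMeasurable f).stronglyMeasurable_mk,
      (MeasureTheory.Lp.aestronglyMeasurable f).ae_eq_mk⟩
  set G : AddCircle (1:ℝ) → ℂ := AddCircle.liftIoc (1:ℝ) 0 h with hG
  have hGmeas : StronglyMeasurable G :=
    hmeas.comp_measurable
      (measurable_subtype_coe.comp (AddCircle.measurableEquivIoc (1:ℝ) 0).measurable)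
  have hmem : ∀ᵐ x ∂μ01, x ∈ Set.Ioc (0:ℝ) 1 := by
    rw [μ01_eq_Ioc]; exact ae_restrict_mem measurableSet_Ioc
  have hcomp : (fun x : ℝ => G (↑x : AddCircle (1:ℝ))) =ᵐ[μ01] h := by
    filter_upwards [hmem] with x hx
    exact AddCircle.liftIoc_coe_apply (by simpa using hx)
  have hGmem : MemLp G 2 (AddCircle.haarAddCircle (T := (1:ℝ))) := by
    have hf2 : MemLp (fun x : ℝ => G (↑x : AddCircle (1:ℝ))) 2 μ01 :=
      (MeasureTheory.Lp.memLp f).ae_eq (hae.trans hcomp.symm)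
    rw [← hmp.map_eq]
    exact (memLp_map_measure_iff hGmeas.aestronglyMeasurable
      hmp.measurable.aemeasurable).mpr hf2
  refine ⟨hGmem.toLp G, ?_⟩
  apply MeasureTheory.Lp.ext (p := (2:ENNReal)) (μ := μ01)
  have h3 : (⇑(hGmem.toLp G)) ∘ ((↑) : ℝ → AddCircle (1:ℝ)) =ᵐ[μ01] G ∘ ((↑) : ℝ → AddCircle (1:ℝ)) :=
    hmp.quasiMeasurePreserving.ae_eq_comp (hGmem.coeFn_toLp)
  filter_upwards [U_coeFn (hGmem.toLp G), h3, hcomp, hae] with x h4 h5 h6 h7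
  rw [h4]
  have h5' : (hGmem.toLp G) (↑x : AddCircle (1:ℝ)) = G (↑x : AddCircle (1:ℝ)) := h5
  rw [h5', h6, h7]

set_option maxHeartbeats 1000000 in
set_option maxHeartbeats 1000000 in
lemma orthonormal_eFull : Orthonormal ℂ eFull := by
  rw [orthonormal_iff_ite]
  intro i j
  have := orthonormal_iff_ite.mp (@orthonormal_fourier 1 _)
  rw [← U_fourier i, ← U_fourier j, U.inner_map_map]
  exact this i j


lemma dense_eFull : closure (↑(Submodule.span ℂ (Set.range eFull)) : Set L2) = Set.univ := by
  apply Set.eq_univ_of_forall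
  intro f
  obtain ⟨g, rfl⟩ := U_surjective f
  have hg : g ∈ closure (↑(Submodule.span ℂ (Set.range (fourierLp (T := (1:ℝ)) 2))) :
      Set (Lp ℂ 2 (AddCircle.haarAddCircle (T := (1:ℝ))))) := by
    have h1 := span_fourierLp_closure_eq_top (T := (1:ℝ)) (p := 2) (by norm_num)
    have h2 : g ∈ (Submodule.span ℂ (Set.range (fourierLp (T := (1:ℝ)) 2))).topologicalClosure := by
      rw [h1]; trivial
    exact h2
  have hcont : Continuous U := U.continuous
  have himg : U '' (↑(Submodule.span ℂ (Set.range (fourierLp (T := (1:ℝ)) 2)))) ⊆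
      ↑(Submodule.span ℂ (Set.range eFull)) := by
    intro y hy
    obtain ⟨z, hz, rfl⟩ := hy
    have hms := Submodule.map_span U.toLinearMap (Set.range (fourierLp (T := (1:ℝ)) 2))
    have hzmem : U z ∈ Submodule.map U.toLinearMap
        (Submodule.span ℂ (Set.range (fourierLp (T := (1:ℝ)) 2))) := ⟨z, hz, rfl⟩
    rw [hms] at hzmem
    refine Submodule.span_le.mpr ?_ hzmem
    rintro _ ⟨_, ⟨n, rfl⟩, rfl⟩
    exact Submodule.subset_span ⟨n, (U_fourier n).symm⟩
  have step1 : U g ∈ U '' closure (↑(Submodule.span ℂ (Set.range (fourierLp (T := (1:ℝ)) 2)))) :=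
    Set.mem_image_of_mem U hg
  have step2 := image_closure_subset_closure_image (s := (↑(Submodule.span ℂ (Set.range (fourierLp (T := (1:ℝ)) 2))) : Set (Lp ℂ 2 (AddCircle.haarAddCircle (T := (1:ℝ)))))) hcont
  exact closure_mono himg (step2 step1)


lemma on_norm_sum {ι : Type*} {v : ι → L2} (hv : Orthonormal ℂ v) (s : Finset ι) (c : ι → ℂ) :
    ‖∑ i ∈ s, c i • v i‖^2 = ∑ i ∈ s, ‖c i‖^2 := by
  have h := hv.inner_sum c c s
  rw [@norm_sq_eq_re_inner ℂ, h, map_sum]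
  apply Finset.sum_congr rfl
  intro i _
  rw [RCLike.conj_mul]
  norm_cast

lemma le_of_sq_le_sq' {x y : ℝ} (hx : 0 ≤ x) (h : x^2 ≤ y^2) (hy : 0 ≤ y) : x ≤ y := by
  nlinarith

lemma lower_mixed {A0 A1 B0 m0 m1 a e b w f : ℝ}
    (hA0 : 0 < A0) (hA1 : 0 < A1) (hB0 : 0 ≤ B0)
    (hm0 : 0 ≤ m0) (hm1 : 0 ≤ m1) (ha : 0 ≤ a) (he : 0 ≤ e) (hb : 0 ≤ b) (hw : 0 ≤ w)
    (hf : 0 ≤ f)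
    (hpy : f^2 = a^2 + e^2)
    (hu0 : A0 * m0 ≤ a^2)
    (hu1 : A1 * m1 ≤ b^2)
    (htri : b ≤ e + w)
    (hwb : w ≤ (1 + Real.sqrt B0) * Real.sqrt m0) :
    m0 + m1 ≤ (1/A0 + (1 + (1+Real.sqrt B0)/Real.sqrt A0)^2/A1) * f^2 := by
  set s := Real.sqrt A0 with hs
  have hs0 : 0 < s := Real.sqrt_pos.mpr hA0
  have hs2 : s^2 = A0 := Real.sq_sqrt hA0.le
  set q := 1 + Real.sqrt B0 with hq
  have hq0 : 0 < q := by positivity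
  have hm0' : (Real.sqrt m0)^2 = m0 := Real.sq_sqrt hm0
  -- a² ≤ f², e² ≤ f²
  have haf : a ≤ f := le_of_sq_le_sq' ha (by nlinarith) hf
  have hef : e ≤ f := le_of_sq_le_sq' he (by nlinarith) hf
  -- m0 ≤ f²/A0
  have h1 : m0 ≤ f^2/A0 := by
    rw [le_div_iff₀ hA0]; nlinarith
  -- s·√m0 ≤ f
  have h2 : s * Real.sqrt m0 ≤ f := by
    apply le_of_sq_le_sq' (by positivity) _ hf
    rw [mul_pow, hs2, hm0']; nlinarith
  -- w ≤ (q/s) f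
  have h3 : w ≤ (q/s) * f := by
    calc w ≤ q * Real.sqrt m0 := hwb
      _ = (q/s) * (s * Real.sqrt m0) := by field_simp
      _ ≤ (q/s) * f := by
          apply mul_le_mul_of_nonneg_left h2 (by positivity)
  -- b ≤ (1 + q/s) f
  have h4 : b ≤ (1 + q/s) * f := by nlinarith
  -- m1 ≤ (1+q/s)²/A1 f²
  have h5 : m1 ≤ (1+q/s)^2/A1 * f^2 := by
    rw [div_mul_eq_mul_div, le_div_iff₀ hA1]
    calc m1 * A1 = A1 * m1 := by ring
      _ ≤ b^2 := hu1
      _ ≤ ((1+q/s)*f)^2 := pow_le_pow_left₀ hb h4 2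
      _ = (1+q/s)^2 * f^2 := by rw [mul_pow]
  have hexp : (1 + q/s)^2/A1 = (1 + (1+Real.sqrt B0)/Real.sqrt A0)^2/A1 := by rw [← hq, ← hs]
  rw [add_mul]
  rw [← hexp]
  have : m0 ≤ 1/A0 * f^2 := by rw [one_div, inv_mul_eq_div]; exact h1
  linarith

lemma upper_num {q0 q1 x0 x1 f : ℝ} (hf : 0 ≤ f) (hq0 : 0 ≤ q0) (hq1 : 0 ≤ q1)
    (hx0 : 0 ≤ x0) (hx1 : 0 ≤ x1) (h : f ≤ q0*x0 + q1*x1) :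
    f^2 ≤ (2*q0^2+2*q1^2)*(x0^2+x1^2) := by
  nlinarith [sq_nonneg (q0*x0 - q1*x1), sq_nonneg (q0*x1), sq_nonneg (q1*x0), mul_nonneg (mul_nonneg hq0 hx0) (mul_nonneg hq1 hx1)]

lemma split_sum_univ {ι : Type*} [Fintype ι] {αs : ι → Type*} {M : Type*} [AddCommMonoid M]
    (c : (Σ i, αs i) →₀ ℂ) (φ : (Σ i, αs i) → ℂ → M) :
    c.sum φ = ∑ i : ι, (c.split i).sum (fun a b => φ ⟨i, a⟩ b) := by
  classical
  rw [Finsupp.sigma_sum]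
  apply Finset.sum_subset (Finset.subset_univ _)
  intro i _ hi
  have : c.split i = 0 := by
    by_contra hne
    exact hi ((Finsupp.mem_splitSupport_iff_nonzero c i).mpr hne)
  rw [this, Finsupp.sum_zero_index]

lemma riesz_of_bounds {ι : Type*} (f : ι → L2) (A B : ℝ) (hA : 0 < A) (hB : 0 ≤ B)
    (h : ∀ c : ι →₀ ℂ,
      A * (∑ i ∈ c.support, ‖c i‖^2) ≤ ‖∑ i ∈ c.support, c i • f i‖^2 ∧
      ‖∑ i ∈ c.support, c i • f i‖^2 ≤ B * ∑ i ∈ c.support, ‖c i‖^2) :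
    IsRieszSequence f := by
  refine ⟨min A (B+1), B+1, lt_min hA (by linarith), min_le_right _ _, fun c => ?_⟩
  have hnn : (0:ℝ) ≤ ∑ i ∈ c.support, ‖c i‖^2 :=
    Finset.sum_nonneg fun i _ => by positivity
  constructor
  · exact le_trans (mul_le_mul_of_nonneg_right (min_le_left _ _) hnn) (h c).1
  · exact le_trans (h c).2 (mul_le_mul_of_nonneg_right (by linarith) hnn)

lemma subset_closure_span {s : Set L2} {M : Submodule ℂ L2} (hM : IsClosed (↑M : Set L2))
    (hs : s ⊆ ↑M) : closure (↑(Submodule.span ℂ s) : Set L2) ⊆ ↑M :=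
  closure_minimal (by exact_mod_cast Submodule.span_le.mpr hs) hM

lemma fin2_other : ∀ k : Fin 2, k + 1 ≠ k := by decide
lemma fin2_other2 : ∀ k : Fin 2, k + 1 + 1 = k := by decide
lemma fin2_cases : ∀ k j : Fin 2, j = k ∨ j = k + 1 := by decide

lemma decompose (S T : Set ℝ) (hS : MeasurableSet S) (hT : MeasurableSet T)
    (hd : Disjoint S T) (hcov : S ∪ T = Set.Ico (0:ℝ) 1) (f : L2) :
    ∃ f0 f1 : L2, f0 ∈ L2on S ∧ f1 ∈ L2on T ∧ f = f0 + f1 := by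
  have h0 : MemLp (S.indicator ⇑f) 2 μ01 := (MeasureTheory.Lp.memLp f).indicator hS
  have h1 : MemLp (T.indicator ⇑f) 2 μ01 := (MeasureTheory.Lp.memLp f).indicator hT
  refine ⟨h0.toLp _, h1.toLp _, ?_, ?_, ?_⟩
  · filter_upwards [h0.coeFn_toLp] with x hx hxS
    rw [hx, Set.indicator_of_notMem hxS]
  · filter_upwards [h1.coeFn_toLp] with x hx hxT
    rw [hx, Set.indicator_of_notMem hxT]
  · apply MeasureTheory.Lp.ext (p := (2:ENNReal)) (μ := μ01)
    have hmem : ∀ᵐ x ∂μ01, x ∈ Set.Ico (0:ℝ) 1 := by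
      rw [μ01]; exact ae_restrict_mem measurableSet_Ico
    filter_upwards [h0.coeFn_toLp, h1.coeFn_toLp,
      MeasureTheory.Lp.coeFn_add (h0.toLp _) (h1.toLp _), hmem] with x hx0 hx1 hadd hxm
    rw [hadd, Pi.add_apply, hx0, hx1]
    rw [← hcov] at hxm
    have := Set.indicator_union_of_disjoint hd (⇑f)
    calc f x = (S ∪ T).indicator (⇑f) x := by rw [Set.indicator_of_mem hxm]
      _ = S.indicator (⇑f) x + T.indicator (⇑f) x := by rw [this]


/-- Let `I_1, I_2` be nonempty intervals partitioning `[0,1)`, and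
`Λ_1, Λ_2` disjoint subsets of `ℤ` with `Λ_1 ∪ Λ_2 = ℤ` such that `E(I_k, Λ_k)` is a
Riesz basis for `L²(I_k)` for `k = 1,2`. For each `k` let `𝓛_k ⊆ {1,2}` with `k ∈ 𝓛_k`
and `S_k = ⋃_{n ∈ 𝓛_k} I_n`. Then `E(S_1, Λ_1) ∪ E(S_2, Λ_2)` is a Riesz basis for
`L²[0,1)`. -/
theorem stmt_11 (I : Fin 2 → Set ℝ) (hI : ∀ k, (I k).OrdConnected)
    (hne : ∀ k, (I k).Nonempty)
    (hIdisj : ∀ j k, j ≠ k → Disjoint (I j) (I k))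
    (hIcover : (⋃ k, I k) = Set.Ico (0 : ℝ) 1)
    (Λ : Fin 2 → Set ℤ)
    (hΛdisj : ∀ j k, j ≠ k → Disjoint (Λ j) (Λ k))
    (hΛcover : (⋃ k, Λ k) = Set.univ)
    (hRB : ∀ k, IsRieszBasis (fun l : Λ k => expChar (I k) ((l : ℤ) : ℝ)) (L2on (I k)))
    (𝓛 : Fin 2 → Finset (Fin 2)) (h𝓛 : ∀ k, k ∈ 𝓛 k) :
    IsRieszBasis
      (fun p : Σ k : Fin 2, Λ k => expChar (⋃ n ∈ 𝓛 p.1, I n) ((p.2 : ℤ) : ℝ))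
      Set.univ := by
  classical
  have hMk : ∀ k, MeasurableSet (I k) := fun k => (hI k).measurableSet
  set g : (Σ k : Fin 2, Λ k) → L2 :=
    (fun p : Σ k : Fin 2, Λ k => expChar (⋃ n ∈ 𝓛 p.1, I n) ((p.2 : ℤ) : ℝ)) with hg
  have hIunion : ∀ k : Fin 2, I k ∪ I (k+1) = Set.Ico (0:ℝ) 1 := by
    intro k
    rw [← hIcover]
    ext x
    simp only [Set.mem_iUnion, Set.mem_union]
    constructor
    · rintro (h | h)
      exacts [⟨k, h⟩, ⟨k+1, h⟩]
    · rintro ⟨j, hj⟩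
      rcases fin2_cases k j with rfl | rfl
      · exact Or.inl hj
      · exact Or.inr hj
  have hS : ∀ k : Fin 2, (⋃ n ∈ 𝓛 k, I n) = if (k+1) ∈ 𝓛 k then Set.Ico (0:ℝ) 1 else I k := by
    intro k
    by_cases h : (k+1) ∈ 𝓛 k
    · rw [if_pos h]
      have huniv : 𝓛 k = Finset.univ := by
        apply Finset.eq_univ_iff_forall.mpr
        intro j
        rcases fin2_cases k j with rfl | rfl
        · exact h𝓛 _
        · exact h
      rw [huniv, ← hIunion k]
      ext x
      simp only [Finset.mem_univ, Set.iUnion_true, Set.mem_iUnion, Set.mem_union]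
      constructor
      · rintro ⟨j, hj⟩
        rcases fin2_cases k j with rfl | rfl
        · exact Or.inl hj
        · exact Or.inr hj
      · rintro (h' | h')
        exacts [⟨_, h'⟩, ⟨_, h'⟩]
    · rw [if_neg h]
      have hsing : 𝓛 k = {k} := by
        apply Finset.eq_singleton_iff_unique_mem.mpr
        refine ⟨h𝓛 k, fun j hj => ?_⟩
        rcases fin2_cases k j with rfl | rfl
        · rfl
        · exact absurd hj h
      rw [hsing]
      simp
  have heFull : ∀ (k : Fin 2) (n : ℝ), expChar (Set.Ico (0:ℝ) 1) n
      = expChar (I k) n + expChar (I (k+1)) n := by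
    intro k n
    rw [← hIunion k, expChar_union _ _ (hMk k) (hMk _) (hIdisj _ _ (fin2_other k).symm) n]
  have hgdef : ∀ (k : Fin 2) (l : Λ k), g ⟨k, l⟩ = expChar (⋃ n ∈ 𝓛 k, I n) ((l:ℤ):ℝ) :=
    fun k l => by rw [hg]
  have hgk : ∀ (k : Fin 2) (l : Λ k), g ⟨k, l⟩ =
      expChar (I k) ((l:ℤ):ℝ) + (if (k+1) ∈ 𝓛 k then expChar (I (k+1)) ((l:ℤ):ℝ) else 0) := by
    intro k l
    rw [hgdef k l, hS k]
    by_cases h : (k+1) ∈ 𝓛 k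
    · rw [if_pos h, if_pos h, heFull k]
    · rw [if_neg h, if_neg h, add_zero]
  -- Riesz constants for the two given bases
  choose A B hApos hAB hest using fun k => (hRB k).1
  have hBpos : ∀ k, 0 < B k := fun k => lt_of_lt_of_le (hApos k) (hAB k)
  have hψ : Function.Injective (fun p : Σ k : Fin 2, Λ k => ((p.2 : ℤ))) := by
    rintro ⟨k, l⟩ ⟨j, l'⟩ h
    simp only at h
    have hkj : k = j := by
      by_contra hne
      exact Set.disjoint_left.mp (hΛdisj k j hne) l.2 (by rw [h]; exact l'.2)
    subst hkj
    simp only [Sigma.mk.inj_iff, heq_eq_eq, true_and]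
    exact Subtype.ext h
  have hj01 : (0:Fin 2) + 1 = 1 := rfl
  have hj10 : (1:Fin 2) + 1 = 0 := rfl
  set q : Fin 2 → ℝ := fun k => 1 + 2 * Real.sqrt (B k) with hqdef
  have hq0 : ∀ k, 0 ≤ q k := fun k => by rw [hqdef]; positivity
  set K : Fin 2 → ℝ := fun j =>
    1/(A (j+1)) + (1 + (1+Real.sqrt (B (j+1)))/Real.sqrt (A (j+1)))^2/(A j) with hKdef
  have hKpos : ∀ j, 0 < K j := by
    intro j
    rw [hKdef]
    have h1 : 0 < 1/(A (j+1)) := div_pos one_pos (hApos (j+1))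
    have h2 : 0 ≤ (1 + (1+Real.sqrt (B (j+1)))/Real.sqrt (A (j+1)))^2/(A j) :=
      div_nonneg (sq_nonneg _) (hApos j).le
    dsimp only
    linarith
  constructor
  · -- ===== Riesz sequence =====
    have hkey : ∀ c : (Σ k : Fin 2, Λ k) →₀ ℂ,
        (‖∑ p ∈ c.support, c p • g p‖^2 ≤
          (2*(q 0)^2 + 2*(q 1)^2) * ∑ p ∈ c.support, ‖c p‖^2) ∧
        (∀ j : Fin 2, (j+1) ∉ 𝓛 j →
          (∑ p ∈ c.support, ‖c p‖^2) ≤ K j * ‖∑ p ∈ c.support, c p • g p‖^2) := by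
      intro c
      have hTsplit : (∑ p ∈ c.support, c p • g p) =
          ∑ k : Fin 2, ∑ l ∈ (c.split k).support, (c.split k) l • g ⟨k, l⟩ := by
        rw [show (∑ p ∈ c.support, c p • g p) = c.sum (fun p z => z • g p) from rfl,
          split_sum_univ]
        rfl
      have htot : (∑ p ∈ c.support, ‖c p‖^2) =
          ∑ k : Fin 2, ∑ l ∈ (c.split k).support, ‖(c.split k) l‖^2 := by
        rw [show (∑ p ∈ c.support, ‖c p‖^2) = c.sum (fun _ z => ‖z‖^2) from rfl,
          split_sum_univ]
        rfl
      set UU : Fin 2 → L2 :=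
        fun k => ∑ l ∈ (c.split k).support, (c.split k) l • expChar (I k) ((l:ℤ):ℝ) with hUU
      set WW : Fin 2 → L2 :=
        fun k => ∑ l ∈ (c.split k).support, (c.split k) l • expChar (I (k+1)) ((l:ℤ):ℝ) with hWW
      set MM : Fin 2 → ℝ :=
        fun k => ∑ l ∈ (c.split k).support, ‖(c.split k) l‖^2 with hMM
      have hMM0 : ∀ k, 0 ≤ MM k := fun k =>
        Finset.sum_nonneg fun _ _ => by positivity
      have hUlow : ∀ k, A k * MM k ≤ ‖UU k‖^2 := fun k => by
        simpa using (hest k (c.split k)).1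
      have hUup2 : ∀ k, ‖UU k‖^2 ≤ B k * MM k := fun k => by
        simpa using (hest k (c.split k)).2
      have hUup : ∀ k, ‖UU k‖ ≤ Real.sqrt (B k) * Real.sqrt (MM k) := by
        intro k
        apply le_of_sq_le_sq' (norm_nonneg _) _ (by positivity)
        rw [mul_pow, Real.sq_sqrt (hBpos k).le, Real.sq_sqrt (hMM0 k)]
        exact hUup2 k
      have hVeq : ∀ k, (∑ l ∈ (c.split k).support, (c.split k) l • eFull ((l:ℤ)))
          = UU k + WW k := by
        intro k
        rw [hUU, hWW]
        dsimp only
        rw [← Finset.sum_add_distrib]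
        apply Finset.sum_congr rfl
        intro l _
        rw [← smul_add, ← heFull k]
        rfl
      have hVnorm : ∀ k, ‖(∑ l ∈ (c.split k).support, (c.split k) l • eFull ((l:ℤ)))‖
          = Real.sqrt (MM k) := by
        intro k
        rw [← Real.sqrt_sq (norm_nonneg _)]
        congr 1
        rw [hMM]
        exact on_norm_sum (orthonormal_eFull.comp _ Subtype.coe_injective) _ _
      have hWb : ∀ k, ‖WW k‖ ≤ (1 + Real.sqrt (B k)) * Real.sqrt (MM k) := by
        intro k
        have h1 : WW k = (∑ l ∈ (c.split k).support, (c.split k) l • eFull ((l:ℤ))) - UU k := by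
          rw [hVeq k]; abel
        rw [h1]
        calc ‖_ - UU k‖ ≤ ‖(∑ l ∈ (c.split k).support, (c.split k) l • eFull ((l:ℤ)))‖ + ‖UU k‖ :=
              norm_sub_le _ _
          _ ≤ Real.sqrt (MM k) + Real.sqrt (B k) * Real.sqrt (MM k) := by
              rw [hVnorm k]; exact add_le_add le_rfl (hUup k)
          _ = (1 + Real.sqrt (B k)) * Real.sqrt (MM k) := by ring
      have hUmem : ∀ k, UU k ∈ L2on (I k) := by
        intro k
        apply L2on.sum_mem
        intro l _
        exact L2on.smul_mem _ (expChar_mem_L2on _ (hMk k) _)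
      have hWmem : ∀ k, WW k ∈ L2on (I (k+1)) := by
        intro k
        apply L2on.sum_mem
        intro l _
        exact L2on.smul_mem _ (expChar_mem_L2on _ (hMk (k+1)) _)
      have hterm : ∀ k : Fin 2, (∑ l ∈ (c.split k).support, (c.split k) l • g ⟨k, l⟩)
          = UU k + (if (k+1) ∈ 𝓛 k then WW k else 0) := by
        intro k
        by_cases h : (k+1) ∈ 𝓛 k
        · rw [if_pos h, hUU, hWW]
          dsimp only
          rw [← Finset.sum_add_distrib]
          apply Finset.sum_congr rfl
          intro l _
          rw [hgk k l, if_pos h, smul_add]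
        · rw [if_neg h, add_zero, hUU]
          apply Finset.sum_congr rfl
          intro l _
          rw [hgk k l, if_neg h, add_zero]
      have hWifb : ∀ k, ‖(if (k+1) ∈ 𝓛 k then WW k else 0)‖ ≤
          (1 + Real.sqrt (B k)) * Real.sqrt (MM k) := by
        intro k
        by_cases h : (k+1) ∈ 𝓛 k
        · rw [if_pos h]; exact hWb k
        · rw [if_neg h, norm_zero]; positivity
      have hWifmem : ∀ k, (if (k+1) ∈ 𝓛 k then WW k else 0) ∈ L2on (I (k+1)) := by
        intro k
        by_cases h : (k+1) ∈ 𝓛 k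
        · rw [if_pos h]; exact hWmem k
        · rw [if_neg h]; exact L2on.zero_mem _
      constructor
      · -- upper bound
        have h2 : ∀ k : Fin 2, ‖∑ l ∈ (c.split k).support, (c.split k) l • g ⟨k, l⟩‖ ≤
            q k * Real.sqrt (MM k) := by
          intro k
          rw [hterm k]
          calc ‖UU k + _‖ ≤ ‖UU k‖ + ‖(if (k+1) ∈ 𝓛 k then WW k else 0)‖ := norm_add_le _ _
            _ ≤ Real.sqrt (B k) * Real.sqrt (MM k) + (1 + Real.sqrt (B k)) * Real.sqrt (MM k) :=
                add_le_add (hUup k) (hWifb k)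
            _ = q k * Real.sqrt (MM k) := by rw [hqdef]; ring
        have htri : ‖∑ p ∈ c.support, c p • g p‖ ≤
            q 0 * Real.sqrt (MM 0) + q 1 * Real.sqrt (MM 1) := by
          rw [hTsplit, Fin.sum_univ_two]
          exact le_trans (norm_add_le _ _) (add_le_add (h2 0) (h2 1))
        have hres := upper_num (norm_nonneg _) (hq0 0) (hq0 1) (Real.sqrt_nonneg _)
          (Real.sqrt_nonneg _) htri
        rw [Real.sq_sqrt (hMM0 0), Real.sq_sqrt (hMM0 1)] at hres
        rw [htot, Fin.sum_univ_two]
        exact hres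
      · -- lower bound, mixed case
        intro j hj
        have hT2 : (∑ p ∈ c.support, c p • g p) =
            UU (j+1) + ((if (j+1+1) ∈ 𝓛 (j+1) then WW (j+1) else 0) + UU j) := by
          rw [hTsplit, Fin.sum_univ_two, hterm 0, hterm 1]
          rcases fin2_cases 0 j with rfl | hjj
          · rw [if_neg hj] at *
            rw [hj01]
            abel
          · rw [hj01] at hjj
            subst hjj
            rw [if_neg hj] at *
            rw [hj10]
            abel
        have hWUmem : ((if (j+1+1) ∈ 𝓛 (j+1) then WW (j+1) else 0) + UU j) ∈ L2on (I j) := by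
          apply L2on.add_mem _ (hUmem j)
          have h := hWifmem (j+1)
          rw [show I (j+1+1) = I j from by rw [fin2_other2 j]] at h
          exact h
        have hpy : ‖∑ p ∈ c.support, c p • g p‖^2 =
            ‖UU (j+1)‖^2 + ‖(if (j+1+1) ∈ 𝓛 (j+1) then WW (j+1) else 0) + UU j‖^2 := by
          rw [hT2]
          exact norm_add_sq_of_disjoint (hIdisj (j+1) j (fin2_other j)) (hUmem (j+1)) hWUmem
        have htri2 : ‖UU j‖ ≤ ‖(if (j+1+1) ∈ 𝓛 (j+1) then WW (j+1) else 0) + UU j‖ +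
            ‖(if (j+1+1) ∈ 𝓛 (j+1) then WW (j+1) else 0)‖ := by
          have : UU j = ((if (j+1+1) ∈ 𝓛 (j+1) then WW (j+1) else 0) + UU j) -
              (if (j+1+1) ∈ 𝓛 (j+1) then WW (j+1) else 0) := by abel
          calc ‖UU j‖ = ‖_ - _‖ := by rw [← this]
            _ ≤ _ := norm_sub_le _ _
        have hlm := lower_mixed (hApos (j+1)) (hApos j) (hBpos (j+1)).le
          (hMM0 (j+1)) (hMM0 j) (norm_nonneg (UU (j+1))) (norm_nonneg _)
          (norm_nonneg (UU j)) (norm_nonneg _) (norm_nonneg _)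
          hpy (hUlow (j+1)) (hUlow j) htri2 (hWifb (j+1))
        have hmsum : (∑ p ∈ c.support, ‖c p‖^2) = MM (j+1) + MM j := by
          rw [htot, Fin.sum_univ_two]
          rcases fin2_cases 0 j with rfl | hjj
          · rw [hj01]; ring
          · rw [hj01] at hjj
            subst hjj
            rw [hj10]
        rw [hmsum, hKdef]
        exact hlm
    -- case analysis
    by_cases ht0 : (0:Fin 2)+1 ∈ 𝓛 0
    · by_cases ht1 : (1:Fin 2)+1 ∈ 𝓛 1
      · -- both full: orthonormal basis case
        have hgeq : ∀ p : Σ k : Fin 2, Λ k, g p = eFull ((p.2:ℤ)) := by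
          rintro ⟨k, l⟩
          rw [hgdef k l, hS k, if_pos ?_]
          · rfl
          · rcases fin2_cases 0 k with rfl | hk
            · exact ht0
            · rw [hj01] at hk; subst hk; exact ht1
        apply riesz_of_bounds g 1 1 one_pos one_pos.le
        intro c
        have : (∑ p ∈ c.support, c p • g p) =
            ∑ p ∈ c.support, c p • (fun p : Σ k : Fin 2, Λ k => eFull ((p.2:ℤ))) p := by
          apply Finset.sum_congr rfl
          intro p _
          rw [hgeq p]
        rw [this, on_norm_sum (v := fun p : Σ k : Fin 2, Λ k => eFull ((p.2:ℤ)))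
          (orthonormal_eFull.comp _ hψ) c.support ⇑c]
        simp
      · -- j = 1 clean
        apply riesz_of_bounds g (K 1)⁻¹ (2*(q 0)^2 + 2*(q 1)^2)
          (inv_pos.mpr (hKpos 1)) (by positivity)
        intro c
        refine ⟨?_, (hkey c).1⟩
        have hlow := (hkey c).2 1 ht1
        calc (K 1)⁻¹ * (∑ p ∈ c.support, ‖c p‖^2) ≤
            (K 1)⁻¹ * (K 1 * ‖∑ p ∈ c.support, c p • g p‖^2) :=
              mul_le_mul_of_nonneg_left hlow (inv_nonneg.mpr (hKpos 1).le)
          _ = ‖∑ p ∈ c.support, c p • g p‖^2 := by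
              rw [← mul_assoc, inv_mul_cancel₀ (hKpos 1).ne', one_mul]
    · -- j = 0 clean
      apply riesz_of_bounds g (K 0)⁻¹ (2*(q 0)^2 + 2*(q 1)^2)
        (inv_pos.mpr (hKpos 0)) (by positivity)
      intro c
      refine ⟨?_, (hkey c).1⟩
      have hlow := (hkey c).2 0 ht0
      calc (K 0)⁻¹ * (∑ p ∈ c.support, ‖c p‖^2) ≤
          (K 0)⁻¹ * (K 0 * ‖∑ p ∈ c.support, c p • g p‖^2) :=
            mul_le_mul_of_nonneg_left hlow (inv_nonneg.mpr (hKpos 0).le)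
        _ = ‖∑ p ∈ c.support, c p • g p‖^2 := by
            rw [← mul_assoc, inv_mul_cancel₀ (hKpos 0).ne', one_mul]
  · -- ===== completeness =====
    set M : Submodule ℂ L2 := (Submodule.span ℂ (Set.range g)).topologicalClosure with hM
    have hMclosed : IsClosed (↑M : Set L2) := Submodule.isClosed_topologicalClosure _
    have hMc : closure (↑(Submodule.span ℂ (Set.range g)) : Set L2) = ↑M :=
      (Submodule.topologicalClosure_coe _).symm
    rw [hMc]
    have hgen : ∀ (k : Fin 2) (l : Λ k), g ⟨k, l⟩ ∈ M := fun k l =>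
      Submodule.le_topologicalClosure _ (Submodule.subset_span ⟨⟨k, l⟩, rfl⟩)
    by_cases ht0 : (0:Fin 2)+1 ∈ 𝓛 0 <;> by_cases ht1 : (1:Fin 2)+1 ∈ 𝓛 1
    · -- both full: use density of all exponentials
      have hrange : Set.range eFull ⊆ ↑M := by
        rintro x ⟨n, rfl⟩
        have hn : n ∈ ⋃ k, Λ k := by rw [hΛcover]; trivial
        obtain ⟨k, hk⟩ := Set.mem_iUnion.mp hn
        have : g ⟨k, ⟨n, hk⟩⟩ = eFull n := by
          rw [hgdef k ⟨n, hk⟩, hS k, if_pos ?_]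
          · rfl
          · rcases fin2_cases 0 k with rfl | hk'
            · exact ht0
            · rw [show (0:Fin 2)+1 = 1 from rfl] at hk'; subst hk'; exact ht1
        rw [← this]
        exact hgen k ⟨n, hk⟩
      apply Set.eq_univ_of_univ_subset
      rw [← dense_eFull]
      exact subset_closure_span hMclosed hrange
    all_goals {
      -- at least one of the 𝓛's is a singleton
      have hstep1 : ∀ k : Fin 2, (k+1) ∉ 𝓛 k → L2on (I k) ⊆ ↑M := by
        intro k hk
        rw [← (hRB k).2]
        apply subset_closure_span hMclosed
        rintro x ⟨l, rfl⟩
        show expChar (I k) ((l:ℤ):ℝ) ∈ (↑M : Set L2)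
        have : g ⟨k, l⟩ = expChar (I k) ((l:ℤ):ℝ) := by
          rw [hgdef k l, hS k, if_neg hk]
        rw [← this]
        exact hgen k l
      have hstep2 : ∀ k : Fin 2, L2on (I (k+1)) ⊆ ↑M → L2on (I k) ⊆ ↑M := by
        intro k hok
        by_cases hk : (k+1) ∈ 𝓛 k
        · rw [← (hRB k).2]
          apply subset_closure_span hMclosed
          rintro x ⟨l, rfl⟩
          show expChar (I k) ((l:ℤ):ℝ) ∈ (↑M : Set L2)
          have h1 : g ⟨k, l⟩ = expChar (Set.Ico (0:ℝ) 1) ((l:ℤ):ℝ) := by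
            rw [hgdef k l, hS k, if_pos hk]
          have h2 : expChar (I k) ((l:ℤ):ℝ) = g ⟨k, l⟩ - expChar (I (k+1)) ((l:ℤ):ℝ) := by
            rw [h1, heFull k ((l:ℤ):ℝ)]
            abel
          rw [h2]
          exact M.sub_mem (hgen k l) (hok (expChar_mem_L2on _ (hMk (k+1)) _))
        · exact hstep1 k hk
      have hL01 : L2on (I 0) ⊆ ↑M ∧ L2on (I 1) ⊆ ↑M := by
        first
        | (have h0 : L2on (I 0) ⊆ ↑M := by
            apply hstep1 0
            rw [hj01]
            rw [hj01] at ht0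
            exact ht0
           refine ⟨h0, ?_⟩
           apply hstep2 1
           rw [hj10]
           exact h0)
        | (have h1 : L2on (I 1) ⊆ ↑M := by
            apply hstep1 1
            rw [hj10]
            rw [hj10] at ht1
            exact ht1
           refine ⟨?_, h1⟩
           apply hstep2 0
           rw [hj01]
           exact h1)
      apply Set.eq_univ_of_forall
      intro f
      obtain ⟨f0, f1, hf0, hf1, rfl⟩ := decompose (I 0) (I 1) (hMk 0) (hMk 1)
        (hIdisj 0 1 (by decide)) (by rw [← hIunion 0]; rfl) f
      exact M.add_mem (hL01.1 hf0) (hL01.2 hf1)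
    }
end
end

section
/- Let I_1, I_2, I_3 be nonempty intervals partitioning [0,1), and let Λ_1, Λ_2, Λ_3 be a partition of ℤ such that for each k the system E(I_k, Λ_k) is a Riesz sequence in L²(I_k) with lower Riesz bound α_k > 0. For each k let 𝓛_k ⊆ {1,2,3} with k ∈ 𝓛_k, set S_k = ⋃_{n∈𝓛_k} I_n, and suppose that the complements {1,2,3}∖𝓛_1, {1,2,3}∖𝓛_2, {1,2,3}∖𝓛_3 are pairwise disjoint. Then for every c = (c_n)_{n∈ℤ} ∈ ℓ²(ℤ), ‖ ∑_{k=1}^3 ∑_{λ∈Λ_k} c_λ e^{2πiλ(·)} χ_{[0,1)∖S_k} ‖²_{L²[0,1)} ≤ (1 − min{α_1, α_2, α_3}) · ‖c‖²_{ℓ²}. -/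
open MeasureTheory Complex Real Set
open scoped Classical
open scoped ComplexInnerProductSpace

noncomputable section

instance inst_s12 : IsFiniteMeasure μ01 := by
  constructor
  rw [μ01, Measure.restrict_apply_univ, Real.volume_Ico]
  norm_num

/-- the exponential -/
def Efun (lam : ℝ) (x : ℝ) : ℂ := Complex.exp (2 * Real.pi * lam * x * Complex.I)

lemma expChar_def (S : Set ℝ) (lam : ℝ) : expChar S lam = toL2 (S.indicator (Efun lam)) := rfl

lemma Efun_cont (lam : ℝ) : Continuous (Efun lam) := by
  unfold Efun
  fun_prop

lemma Efun_norm (lam x : ℝ) : ‖Efun lam x‖ = 1 := by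
  unfold Efun
  have : ((2 * Real.pi * lam * x : ℝ) : ℂ) * Complex.I = 2 * Real.pi * lam * x * Complex.I := by
    push_cast; ring
  rw [← this, Complex.norm_exp_ofReal_mul_I]

lemma memL2_of_bdd {f : ℝ → ℂ} (hm : AEStronglyMeasurable f μ01) (C : ℝ)
    (h : ∀ x, ‖f x‖ ≤ C) : MemLp f 2 μ01 :=
  MemLp.of_bound hm C (Filter.Eventually.of_forall h)

lemma integrable_of_bdd {E : Type*} [NormedAddCommGroup E] {f : ℝ → E}
    (hm : AEStronglyMeasurable f μ01) (C : ℝ)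
    (h : ∀ x, ‖f x‖ ≤ C) : Integrable f μ01 :=
  memLp_one_iff_integrable.mp (MemLp.of_bound hm C (Filter.Eventually.of_forall h))

lemma norm_toL2_sq {f : ℝ → ℂ} (hf : MemLp f 2 μ01) :
    ‖toL2 f‖ ^ 2 = ∫ x, ‖f x‖ ^ 2 ∂μ01 := by
  rw [toL2, dif_pos hf]
  have h1 : (‖hf.toLp f‖ : ℝ) ^ 2 = RCLike.re (K := ℂ) ⟪hf.toLp f, hf.toLp f⟫ :=
    (inner_self_eq_norm_sq _).symm
  rw [h1, MeasureTheory.L2.inner_def]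
  have h2 : ∫ a, ⟪(hf.toLp f : L2) a, (hf.toLp f : L2) a⟫ ∂μ01
      = ∫ a, ((‖f a‖^2 : ℝ) : ℂ) ∂μ01 := by
    apply integral_congr_ae
    filter_upwards [hf.coeFn_toLp] with a ha
    rw [ha]
    simp only [inner, RCLike.inner_apply]
    rw [← starRingEnd_apply, Complex.mul_conj']
    norm_cast
  have hint : Integrable (fun a => ((‖f a‖^2 : ℝ) : ℂ)) μ01 := by
    apply Integrable.ofReal
    exact hf.norm.integrable_sq
  rw [h2, ← integral_re hint]
  simp only [RCLike.re_to_complex]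
  apply integral_congr_ae
  filter_upwards with x
  norm_cast

/-- a trig polynomial -/
def trigPoly (c : ℤ → ℂ) (F : Finset ℤ) (x : ℝ) : ℂ := ∑ n ∈ F, c n * Efun n x

lemma trigPoly_cont (c : ℤ → ℂ) (F : Finset ℤ) : Continuous (trigPoly c F) := by
  apply continuous_finset_sum
  intro n _
  exact continuous_const.mul (Efun_cont _)

lemma trigPoly_bdd (c : ℤ → ℂ) (F : Finset ℤ) (x : ℝ) :
    ‖trigPoly c F x‖ ≤ ∑ n ∈ F, ‖c n‖ := by
  refine (norm_sum_le _ _).trans ?_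
  apply Finset.sum_le_sum
  intro n _
  rw [norm_mul, Efun_norm, mul_one]

lemma memL2_indicator_trigPoly {S : Set ℝ} (hS : MeasurableSet S) (c : ℤ → ℂ) (F : Finset ℤ) :
    MemLp (S.indicator (trigPoly c F)) 2 μ01 := by
  apply memL2_of_bdd
  · exact ((trigPoly_cont c F).aestronglyMeasurable).indicator hS
  · intro x
    rw [norm_indicator_eq_indicator_norm]
    by_cases h : x ∈ S
    · rw [Set.indicator_of_mem h]; exact trigPoly_bdd c F x
    · rw [Set.indicator_of_notMem h]
      exact Finset.sum_nonneg fun n _ => norm_nonneg _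

/-- The quadratic functional. -/
def Q (S : Set ℝ) (φ : ℝ → ℂ) : ℝ := ∫ x, S.indicator (fun y => ‖φ y‖^2) x ∂μ01

lemma integrable_Q_integrand {S : Set ℝ} (hS : MeasurableSet S) (c : ℤ → ℂ) (F : Finset ℤ) :
    Integrable (S.indicator (fun y => ‖trigPoly c F y‖^2)) μ01 := by
  apply integrable_of_bdd ((((trigPoly_cont c F).norm.pow 2).aestronglyMeasurable).indicator hS)
    ((∑ n ∈ F, ‖c n‖)^2)
  intro x
  rw [Real.norm_eq_abs, abs_le]
  constructor
  · have : (0:ℝ) ≤ S.indicator (fun y => ‖trigPoly c F y‖^2) x := by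
      by_cases h : x ∈ S
      · rw [Set.indicator_of_mem h]; positivity
      · rw [Set.indicator_of_notMem h]
    have h2 : -((∑ n ∈ F, ‖c n‖)^2) ≤ 0 := by
      simp only [neg_nonpos]
      positivity
    exact h2.trans this
  · by_cases h : x ∈ S
    · rw [Set.indicator_of_mem h]
      exact pow_le_pow_left₀ (norm_nonneg _) (trigPoly_bdd c F x) 2
    · rw [Set.indicator_of_notMem h]; positivity

lemma toL2_zero : toL2 (fun _ => (0:ℂ)) = 0 := by
  rw [toL2, dif_pos (show MemLp (fun _ => (0:ℂ)) 2 μ01 from memLp_const 0)]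
  exact MemLp.toLp_zero _

lemma toL2_add {f g : ℝ → ℂ} (hf : MemLp f 2 μ01) (hg : MemLp g 2 μ01) :
    toL2 (fun x => f x + g x) = toL2 f + toL2 g := by
  rw [toL2, toL2, toL2, dif_pos hf, dif_pos hg,
    dif_pos (show MemLp (fun x => f x + g x) 2 μ01 from hf.add hg)]
  exact MemLp.toLp_add hf hg

lemma toL2_smul (a : ℂ) {f : ℝ → ℂ} (hf : MemLp f 2 μ01) :
    toL2 (fun x => a * f x) = a • toL2 f := by
  rw [toL2, toL2, dif_pos hf,
    dif_pos (show MemLp (fun x => a * f x) 2 μ01 from hf.const_smul a)]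
  exact MemLp.toLp_const_smul a hf

lemma toL2_sum {ι : Type*} (F : Finset ι) (f : ι → ℝ → ℂ)
    (h : ∀ i ∈ F, MemLp (f i) 2 μ01) :
    ∑ i ∈ F, toL2 (f i) = toL2 (fun x => ∑ i ∈ F, f i x) := by
  induction F using Finset.cons_induction with
  | empty => simp [toL2_zero]
  | cons a F ha ih =>
    rw [Finset.sum_cons, ih (fun i hi => h i (Finset.mem_cons_of_mem hi))]
    have hsum : MemLp (fun x => ∑ i ∈ F, f i x) 2 μ01 :=
      memLp_finset_sum F (fun i hi => h i (Finset.mem_cons_of_mem hi))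
    rw [← toL2_add (h a (Finset.mem_cons_self a F)) hsum]
    congr 1
    funext x
    rw [Finset.sum_cons]

lemma inner_toL2 {f g : ℝ → ℂ} (hf : MemLp f 2 μ01) (hg : MemLp g 2 μ01) :
    ⟪toL2 f, toL2 g⟫ = ∫ x, (starRingEnd ℂ) (f x) * g x ∂μ01 := by
  rw [toL2, toL2, dif_pos hf, dif_pos hg, MeasureTheory.L2.inner_def]
  apply integral_congr_ae
  filter_upwards [hf.coeFn_toLp, hg.coeFn_toLp] with a h1 h2
  rw [h1, h2]
  simp [RCLike.inner_apply, mul_comm]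

lemma expChar_sum_eq {S : Set ℝ} (hS : MeasurableSet S) (c : ℤ → ℂ) (F : Finset ℤ) :
    ∑ n ∈ F, c n • expChar S ((n : ℤ) : ℝ) = toL2 (S.indicator (trigPoly c F)) := by
  have hmem : ∀ n : ℤ, MemLp (S.indicator (Efun n)) 2 μ01 := by
    intro n
    apply memL2_of_bdd (((Efun_cont _).aestronglyMeasurable).indicator hS) 1
    intro x
    rw [norm_indicator_eq_indicator_norm]
    by_cases h : x ∈ S
    · rw [Set.indicator_of_mem h, Efun_norm]
    · rw [Set.indicator_of_notMem h]; norm_num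
  have step1 : ∀ n : ℤ, c n • expChar S ((n:ℤ):ℝ) = toL2 (fun x => c n * S.indicator (Efun n) x) := by
    intro n
    rw [expChar_def, toL2_smul (c n) (hmem n)]
  simp_rw [step1]
  rw [toL2_sum F _ (fun n _ =>
    (show MemLp (fun x => c n * S.indicator (Efun ↑n) x) 2 μ01 from (hmem n).const_smul (c n)))]
  congr 1
  funext x
  by_cases h : x ∈ S
  · simp [Set.indicator_of_mem h, trigPoly]
  · simp [Set.indicator_of_notMem h]

lemma norm_sq_expChar_sum {S : Set ℝ} (hS : MeasurableSet S) (c : ℤ → ℂ) (F : Finset ℤ) :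
    ‖∑ n ∈ F, c n • expChar S ((n : ℤ) : ℝ)‖ ^ 2 = Q S (trigPoly c F) := by
  rw [expChar_sum_eq hS c F, norm_toL2_sq (memL2_indicator_trigPoly hS c F)]
  unfold Q
  apply integral_congr_ae
  filter_upwards with x
  rw [norm_indicator_eq_indicator_norm]
  by_cases h : x ∈ S
  · rw [Set.indicator_of_mem h, Set.indicator_of_mem h]
  · rw [Set.indicator_of_notMem h, Set.indicator_of_notMem h]
    norm_num

lemma Q_union {S T : Set ℝ} (hS : MeasurableSet S) (hT : MeasurableSet T)
    (hd : Disjoint S T) (c : ℤ → ℂ) (F : Finset ℤ) :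
    Q (S ∪ T) (trigPoly c F) = Q S (trigPoly c F) + Q T (trigPoly c F) := by
  unfold Q
  rw [← integral_add (integrable_Q_integrand hS c F) (integrable_Q_integrand hT c F)]
  apply integral_congr_ae
  filter_upwards with x
  rw [Set.indicator_union_of_disjoint hd]

lemma Q_mono {S T : Set ℝ} (hS : MeasurableSet S) (hT : MeasurableSet T)
    (hsub : S ⊆ T) (c : ℤ → ℂ) (F : Finset ℤ) :
    Q S (trigPoly c F) ≤ Q T (trigPoly c F) := by
  unfold Q
  apply integral_mono (integrable_Q_integrand hS c F) (integrable_Q_integrand hT c F)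
  intro x
  apply Set.indicator_le_indicator_of_subset hsub (fun y => by positivity)

lemma orthonormal_exp (m n : ℤ) :
    ∫ x, (starRingEnd ℂ) (Efun m x) * Efun n x ∂μ01 = if m = n then 1 else 0 := by
  have key : ∀ x : ℝ, (starRingEnd ℂ) (Efun (m:ℝ) x) * Efun (n:ℝ) x
      = Complex.exp ((2 * (Real.pi:ℂ) * ((n:ℂ) - (m:ℂ)) * Complex.I) * x) := by
    intro x
    unfold Efun
    rw [← Complex.exp_conj, ← Complex.exp_add]
    congr 1
    simp only [map_mul, Complex.conj_I, Complex.conj_ofReal, map_ofNat]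
    push_cast
    ring
  simp_rw [key]
  have huniv : μ01 Set.univ = 1 := by
    rw [μ01, Measure.restrict_apply_univ, Real.volume_Ico]
    norm_num
  by_cases hmn : m = n
  · subst hmn
    rw [if_pos rfl]
    simp only [sub_self, mul_zero, zero_mul, Complex.exp_zero]
    simp [integral_const, measureReal_def, huniv]
  · rw [if_neg hmn]
    set cc : ℂ := 2 * (Real.pi:ℂ) * ((n:ℂ) - (m:ℂ)) * Complex.I with hcc
    have hc0 : cc ≠ 0 := by
      apply mul_ne_zero (mul_ne_zero (mul_ne_zero two_ne_zero ?_) ?_) Complex.I_ne_zero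
      · exact_mod_cast Complex.ofReal_ne_zero.mpr Real.pi_ne_zero
      · rw [sub_ne_zero]
        exact_mod_cast fun h => hmn (by exact_mod_cast h.symm)
    have : ∫ x, Complex.exp (cc * x) ∂μ01 = ∫ x in (0:ℝ)..1, Complex.exp (cc * x) := by
      rw [μ01, intervalIntegral.integral_of_le zero_le_one, integral_Ioc_eq_integral_Ioo,
        integral_Ico_eq_integral_Ioo]
    rw [this, integral_exp_mul_complex hc0, Complex.ofReal_one, Complex.ofReal_zero,
      mul_one, mul_zero, Complex.exp_zero]
    have h3 : Complex.exp cc = 1 := by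
      rw [show cc = ((n - m : ℤ) : ℂ) * (2 * (Real.pi:ℂ) * Complex.I) by
        rw [hcc]; push_cast; ring]
      exact Complex.exp_int_mul_two_pi_mul_I _
    rw [h3, sub_self, zero_div]

lemma memL2_trigPoly (c : ℤ → ℂ) (F : Finset ℤ) : MemLp (trigPoly c F) 2 μ01 :=
  memL2_of_bdd (trigPoly_cont c F).aestronglyMeasurable _ (trigPoly_bdd c F)

lemma integrable_exp_pair (a b : ℂ) (m n : ℤ) :
    Integrable (fun x => a * b * ((starRingEnd ℂ) (Efun m x) * Efun n x)) μ01 := by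
  refine integrable_of_bdd ?_ (‖a‖ * ‖b‖) ?_
  · apply Continuous.aestronglyMeasurable
    apply Continuous.mul continuous_const
    exact ((Complex.continuous_conj.comp (Efun_cont _)).mul (Efun_cont _))
  · intro x
    rw [norm_mul, norm_mul, norm_mul, RCLike.norm_conj, Efun_norm, Efun_norm]
    simp

lemma Q_Ico (c : ℤ → ℂ) (F : Finset ℤ) :
    Q (Set.Ico (0:ℝ) 1) (trigPoly c F) = ∑ n ∈ F, ‖c n‖^2 := by
  have h0 : Q (Set.Ico (0:ℝ) 1) (trigPoly c F) = ‖toL2 (trigPoly c F)‖^2 := by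
    rw [norm_toL2_sq (memL2_trigPoly c F)]
    unfold Q
    apply integral_congr_ae
    have : ∀ᵐ x ∂μ01, x ∈ Set.Ico (0:ℝ) 1 := by
      rw [μ01]; exact ae_restrict_mem measurableSet_Ico
    filter_upwards [this] with x hx
    rw [Set.indicator_of_mem hx]
  rw [h0]
  have h1 : (‖toL2 (trigPoly c F)‖:ℝ)^2
      = RCLike.re (K := ℂ) ⟪toL2 (trigPoly c F), toL2 (trigPoly c F)⟫ :=
    (inner_self_eq_norm_sq _).symm
  rw [h1, inner_toL2 (memL2_trigPoly c F) (memL2_trigPoly c F)]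
  have expand : ∀ x, (starRingEnd ℂ) (trigPoly c F x) * trigPoly c F x
      = ∑ m ∈ F, ∑ n ∈ F, (starRingEnd ℂ) (c m) * c n * ((starRingEnd ℂ) (Efun m x) * Efun n x) := by
    intro x
    unfold trigPoly
    rw [map_sum, Finset.sum_mul_sum]
    apply Finset.sum_congr rfl
    intro m _
    apply Finset.sum_congr rfl
    intro n _
    rw [map_mul]
    ring
  simp_rw [expand]
  rw [integral_finset_sum F (fun m _ => integrable_finset_sum F
    (fun n _ => integrable_exp_pair _ _ m n))]
  have : ∀ m ∈ F, ∫ x, ∑ n ∈ F, (starRingEnd ℂ) (c m) * c n * ((starRingEnd ℂ) (Efun m x) * Efun n x) ∂μ01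
      = ∑ n ∈ F, (starRingEnd ℂ) (c m) * c n * (if m = n then 1 else 0) := by
    intro m _
    rw [integral_finset_sum F (fun n _ => integrable_exp_pair _ _ m n)]
    apply Finset.sum_congr rfl
    intro n _
    rw [integral_const_mul, orthonormal_exp]
  rw [Finset.sum_congr rfl this]
  have : ∀ m ∈ F, ∑ n ∈ F, (starRingEnd ℂ) (c m) * c n * (if m = n then 1 else 0)
      = (starRingEnd ℂ) (c m) * c m := by
    intro m hm
    rw [Finset.sum_eq_single m]
    · simp
    · intro n _ hnm
      rw [if_neg (fun h => hnm h.symm), mul_zero]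
    · intro h
      exact absurd hm h
  rw [Finset.sum_congr rfl this]
  have h4 : ∑ m ∈ F, (starRingEnd ℂ) (c m) * c m = ∑ m ∈ F, ((‖c m‖^2 : ℝ) : ℂ) :=
    Finset.sum_congr rfl (fun m _ => by
      rw [mul_comm, Complex.mul_conj']
      norm_cast)
  rw [h4, RCLike.re_to_complex]
  norm_cast

lemma aux_main
    (Λ : Fin 3 → Set ℤ) (κ : ℤ → Fin 3) (hκ : ∀ n, n ∈ Λ (κ n))
    (α : Fin 3 → ℝ) (αm : ℝ) (hαm_le : ∀ k, αm ≤ α k)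
    (S T : Fin 3 → Set ℝ)
    (hSmeas : ∀ k, MeasurableSet (S k)) (hTmeas : ∀ k, MeasurableSet (T k))
    (hTd : ∀ j k, j ≠ k → Disjoint (T j) (T k))
    (hcover : ∀ k, S k ∪ T k = Set.Ico (0:ℝ) 1)
    (I : Fin 3 → Set ℝ) (hImeas : ∀ k, MeasurableSet (I k))
    (hIS : ∀ k, I k ⊆ S k)
    (hdisjST : ∀ k, Disjoint (S k) (T k))
    (hRS : ∀ k, ∃ B : ℝ, α k ≤ B ∧ ∀ c : Λ k →₀ ℂ,
      (α k * ∑ i ∈ c.support, ‖c i‖ ^ 2 ≤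
        ‖∑ i ∈ c.support, c i • expChar (I k) (((i : ℤ) : ℝ))‖ ^ 2) ∧
      ‖∑ i ∈ c.support, c i • expChar (I k) (((i : ℤ) : ℝ))‖ ^ 2 ≤
        B * ∑ i ∈ c.support, ‖c i‖ ^ 2)
    (c : ℤ → ℂ) (hc : Summable (fun n => ‖c n‖ ^ 2))
    (g : L2) (hg : HasSum (fun n : ℤ => c n • expChar (T (κ n)) ((n : ℤ) : ℝ)) g) :
    ‖g‖ ^ 2 ≤ (1 - αm) * ∑' n : ℤ, ‖c n‖ ^ 2 := by
  have key : ∀ F : Finset ℤ,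
      ‖∑ n ∈ F, c n • expChar (T (κ n)) ((n:ℤ):ℝ)‖^2 + αm * ∑ n ∈ F, ‖c n‖^2
        ≤ ∑ n ∈ F, ‖c n‖^2 := by
    intro F
    set Fk : Fin 3 → Finset ℤ := fun k => F.filter (fun n => κ n = k) with hFk
    have hΛFk : ∀ k, ∀ n ∈ Fk k, n ∈ Λ k := by
      intro k n hn
      have h := (Finset.mem_filter.mp hn).2
      rw [← h]; exact hκ n
    have hsplit : ∑ n ∈ F, c n • expChar (T (κ n)) ((n:ℤ):ℝ)
        = ∑ k : Fin 3, ∑ n ∈ Fk k, c n • expChar (T k) ((n:ℤ):ℝ) := by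
      rw [← Finset.sum_fiberwise_of_maps_to (fun n _ => Finset.mem_univ (κ n))
        (fun n => c n • expChar (T (κ n)) ((n:ℤ):ℝ))]
      apply Finset.sum_congr rfl
      intro k _
      apply Finset.sum_congr rfl
      intro n hn
      rw [(Finset.mem_filter.mp hn).2]
    have hnorm : ‖∑ n ∈ F, c n • expChar (T (κ n)) ((n:ℤ):ℝ)‖^2
        = ∑ k : Fin 3, Q (T k) (trigPoly c (Fk k)) := by
      rw [hsplit]
      have h1 : ∀ k : Fin 3, ∑ n ∈ Fk k, c n • expChar (T k) ((n:ℤ):ℝ)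
          = toL2 ((T k).indicator (trigPoly c (Fk k))) := fun k =>
        expChar_sum_eq (hTmeas k) c (Fk k)
      rw [Finset.sum_congr rfl (fun k _ => h1 k)]
      rw [toL2_sum Finset.univ _ (fun k _ => memL2_indicator_trigPoly (hTmeas k) c (Fk k))]
      rw [norm_toL2_sq (memLp_finset_sum Finset.univ
        (fun k _ => memL2_indicator_trigPoly (hTmeas k) c (Fk k)))]
      have hpt : ∀ x : ℝ, ‖∑ k : Fin 3, (T k).indicator (trigPoly c (Fk k)) x‖^2
          = ∑ k : Fin 3, (T k).indicator (fun y => ‖trigPoly c (Fk k) y‖^2) x := by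
        intro x
        by_cases hx : ∃ j, x ∈ T j
        · obtain ⟨j, hj⟩ := hx
          have hnot : ∀ k : Fin 3, k ≠ j → x ∉ T k :=
            fun k hk hxk => Set.disjoint_left.mp (hTd k j hk) hxk hj
          rw [Finset.sum_eq_single j (fun k _ hk =>
              Set.indicator_of_notMem (hnot k hk) _)
            (fun h => absurd (Finset.mem_univ j) h)]
          rw [Finset.sum_eq_single j (fun k _ hk =>
              Set.indicator_of_notMem (hnot k hk) _)
            (fun h => absurd (Finset.mem_univ j) h)]
          rw [Set.indicator_of_mem hj, Set.indicator_of_mem hj]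
        · push_neg at hx
          rw [Finset.sum_congr rfl (fun k _ => Set.indicator_of_notMem (hx k)
            (trigPoly c (Fk k)))]
          rw [Finset.sum_congr rfl (fun k _ => Set.indicator_of_notMem (hx k)
            (fun y => ‖trigPoly c (Fk k) y‖^2))]
          simp
      rw [integral_congr_ae (Filter.Eventually.of_forall hpt)]
      rw [integral_finset_sum Finset.univ
        (fun k _ => integrable_Q_integrand (hTmeas k) c (Fk k))]
      rfl
    have perk : ∀ k : Fin 3, Q (T k) (trigPoly c (Fk k)) + α k * ∑ n ∈ Fk k, ‖c n‖^2
        ≤ ∑ n ∈ Fk k, ‖c n‖^2 := by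
      intro k
      have hsum : Q (S k) (trigPoly c (Fk k)) + Q (T k) (trigPoly c (Fk k))
          = ∑ n ∈ Fk k, ‖c n‖^2 := by
        rw [← Q_union (hSmeas k) (hTmeas k) (hdisjST k) c (Fk k), hcover k]
        exact Q_Ico c (Fk k)
      have hriesz : α k * ∑ n ∈ Fk k, ‖c n‖^2 ≤ Q (I k) (trigPoly c (Fk k)) := by
        obtain ⟨B, hB, hRSk⟩ := hRS k
        set s : Finset (Λ k) := (Fk k).subtype (· ∈ Λ k) with hs
        have hcd : ∀ i : Λ k, (fun i : Λ k => if ((i:ℤ) ∈ Fk k) then c i else 0) i ≠ 0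
            → i ∈ s := by
          intro i hi
          simp only [] at hi
          rw [hs, Finset.mem_subtype]
          by_contra hmem
          rw [if_neg hmem] at hi; exact hi rfl
        set c' : Λ k →₀ ℂ := Finsupp.onFinset s _ hcd with hc'
        have happ : ∀ i : Λ k, c' i = if ((i:ℤ) ∈ Fk k) then c i else 0 :=
          fun i => Finsupp.onFinset_apply
        have hsupp : c'.support ⊆ s := Finsupp.support_onFinset_subset
        have hmem_s : ∀ i : Λ k, i ∈ s ↔ (i:ℤ) ∈ Fk k := fun i => Finset.mem_subtype
        have hfilt : (Fk k).filter (fun n => n ∈ Λ k) = Fk k :=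
          Finset.filter_true_of_mem (hΛFk k)
        have hcongr1 : ∑ i ∈ s, ‖c' i‖^2 = ∑ i ∈ s, ‖c (↑i : ℤ)‖^2 :=
          Finset.sum_congr rfl (fun i hi => by
            rw [happ, if_pos ((hmem_s i).mp hi)])
        have hsum1 : ∑ i ∈ c'.support, ‖c' i‖^2 = ∑ n ∈ Fk k, ‖c n‖^2 := by
          rw [Finset.sum_subset hsupp (fun i _ hi => by
            rw [Finsupp.notMem_support_iff.mp hi]; simp)]
          rw [hcongr1, hs, Finset.sum_subtype_eq_sum_filter (fun n => ‖c n‖^2), hfilt]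
        have hcongr2 : ∑ i ∈ s, c' i • expChar (I k) ((i:ℤ):ℝ)
            = ∑ i ∈ s, c (↑i : ℤ) • expChar (I k) ((i:ℤ):ℝ) :=
          Finset.sum_congr rfl (fun i hi => by
            rw [happ, if_pos ((hmem_s i).mp hi)])
        have hsum2 : ∑ i ∈ c'.support, c' i • expChar (I k) ((i:ℤ):ℝ)
            = ∑ n ∈ Fk k, c n • expChar (I k) ((n:ℤ):ℝ) := by
          rw [Finset.sum_subset hsupp (fun i _ hi => by
            rw [Finsupp.notMem_support_iff.mp hi, zero_smul])]
          rw [hcongr2, hs, Finset.sum_subtype_eq_sum_filter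
            (fun n => c n • expChar (I k) ((n:ℤ):ℝ)), hfilt]
        have hlow := (hRSk c').1
        rw [hsum1, hsum2] at hlow
        rw [← norm_sq_expChar_sum (hImeas k) c (Fk k)]
        exact hlow
      have hmono : Q (I k) (trigPoly c (Fk k)) ≤ Q (S k) (trigPoly c (Fk k)) :=
        Q_mono (hImeas k) (hSmeas k) (hIS k) c (Fk k)
      linarith
    have hα' : ∑ k : Fin 3, αm * (∑ n ∈ Fk k, ‖c n‖^2)
        ≤ ∑ k : Fin 3, α k * ∑ n ∈ Fk k, ‖c n‖^2 :=
      Finset.sum_le_sum (fun k _ => mul_le_mul_of_nonneg_right (hαm_le k)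
        (Finset.sum_nonneg (fun n _ => by positivity)))
    have htotal : ∑ k : Fin 3, ∑ n ∈ Fk k, ‖c n‖^2 = ∑ n ∈ F, ‖c n‖^2 :=
      Finset.sum_fiberwise_of_maps_to (fun n _ => Finset.mem_univ (κ n)) _
    have hsumperk := Finset.sum_le_sum (fun k (_ : k ∈ (Finset.univ : Finset (Fin 3))) => perk k)
    rw [Finset.sum_add_distrib] at hsumperk
    rw [hnorm, ← htotal, Finset.mul_sum]
    linarith
  have hcs : HasSum (fun n => ‖c n‖^2) (∑' n, ‖c n‖^2) := hc.hasSum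
  have h1 : Filter.Tendsto (fun F : Finset ℤ =>
      ‖∑ n ∈ F, c n • expChar (T (κ n)) ((n:ℤ):ℝ)‖^2 + αm * ∑ n ∈ F, ‖c n‖^2)
      Filter.atTop (nhds (‖g‖^2 + αm * ∑' n, ‖c n‖^2)) := by
    apply Filter.Tendsto.add
    · exact Filter.Tendsto.pow (Filter.Tendsto.norm hg) 2
    · exact Filter.Tendsto.const_mul αm hcs
  have h2 : ‖g‖^2 + αm * ∑' n, ‖c n‖^2 ≤ ∑' n, ‖c n‖^2 := by
    apply le_of_tendsto h1
    filter_upwards with F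
    exact (key F).trans (Summable.sum_le_tsum F (fun n _ => by positivity) hc)
  have htn : 0 ≤ ∑' n, (‖c n‖^2 : ℝ) := tsum_nonneg (fun n => by positivity)
  have hring : (1 - αm) * ∑' n, (‖c n‖^2:ℝ) = (∑' n, ‖c n‖^2) - αm * ∑' n, ‖c n‖^2 := by ring
  linarith


/-- Let `I_1, I_2, I_3` be nonempty intervals partitioning `[0,1)` and
`Λ_1, Λ_2, Λ_3` a partition of `ℤ` such that each `E(I_k, Λ_k)` is a Riesz sequence in
`L²(I_k)` with lower Riesz bound `α_k > 0`. For each `k` let `𝓛_k ⊆ {1,2,3}` with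
`k ∈ 𝓛_k`, `S_k = ⋃_{n ∈ 𝓛_k} I_n`, and assume the complements `{1,2,3}∖𝓛_k` are
pairwise disjoint. Then for every `c ∈ ℓ²(ℤ)`,
`‖∑_k ∑_{λ∈Λ_k} c_λ e^{2πiλ(·)} χ_{[0,1)∖S_k}‖² ≤ (1 − min{α_1,α_2,α_3})·‖c‖²`
(here `κ : ℤ → {1,2,3}` assigns to each `n ∈ ℤ` the index `k` with `n ∈ Λ_k`, and the sum
is any `L²`-limit `g` of the series). -/
theorem stmt_12 (I : Fin 3 → Set ℝ) (hI : ∀ k, (I k).OrdConnected)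
    (hne : ∀ k, (I k).Nonempty)
    (hIdisj : ∀ j k, j ≠ k → Disjoint (I j) (I k))
    (hIcover : (⋃ k, I k) = Set.Ico (0 : ℝ) 1)
    (Λ : Fin 3 → Set ℤ)
    (hΛdisj : ∀ j k, j ≠ k → Disjoint (Λ j) (Λ k))
    (hΛcover : (⋃ k, Λ k) = Set.univ)
    (α : Fin 3 → ℝ) (hα : ∀ k, 0 < α k)
    (hRS : ∀ k, ∃ B : ℝ, α k ≤ B ∧ ∀ c : Λ k →₀ ℂ,
      (α k * ∑ i ∈ c.support, ‖c i‖ ^ 2 ≤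
        ‖∑ i ∈ c.support, c i • expChar (I k) (((i : ℤ) : ℝ))‖ ^ 2) ∧
      ‖∑ i ∈ c.support, c i • expChar (I k) (((i : ℤ) : ℝ))‖ ^ 2 ≤
        B * ∑ i ∈ c.support, ‖c i‖ ^ 2)
    (𝓛 : Fin 3 → Finset (Fin 3)) (h𝓛 : ∀ k, k ∈ 𝓛 k)
    (hcompl : ∀ j k, j ≠ k → Disjoint ((𝓛 j)ᶜ) ((𝓛 k)ᶜ))
    (κ : ℤ → Fin 3) (hκ : ∀ n, n ∈ Λ (κ n)) :
    ∀ c : ℤ → ℂ, Summable (fun n => ‖c n‖ ^ 2) →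
      ∀ g : L2,
        HasSum (fun n : ℤ =>
          c n • expChar (Set.Ico (0 : ℝ) 1 \ ⋃ m ∈ 𝓛 (κ n), I m) ((n : ℤ) : ℝ)) g →
        ‖g‖ ^ 2 ≤ (1 - min (α 0) (min (α 1) (α 2))) * ∑' n : ℤ, ‖c n‖ ^ 2 := by
  intro c hc g hg
  have hαm_le : ∀ k, min (α 0) (min (α 1) (α 2)) ≤ α k := by
    intro k
    fin_cases k
    · exact min_le_left _ _
    · exact le_trans (min_le_right _ _) (min_le_left _ _)
    · exact le_trans (min_le_right _ _) (min_le_right _ _)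
  have hSmeas : ∀ k : Fin 3, MeasurableSet (⋃ m ∈ 𝓛 k, I m) := fun k =>
    MeasurableSet.biUnion (Set.Countable.mono (Set.subset_univ _) (Set.countable_univ))
      (fun m _ => (hI m).measurableSet)
  have hTmeas : ∀ k : Fin 3, MeasurableSet (Set.Ico (0:ℝ) 1 \ ⋃ m ∈ 𝓛 k, I m) := fun k =>
    measurableSet_Ico.diff (hSmeas k)
  have hSsub : ∀ k : Fin 3, (⋃ m ∈ 𝓛 k, I m) ⊆ Set.Ico (0:ℝ) 1 := by
    intro k x hx
    rw [← hIcover]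
    simp only [Set.mem_iUnion] at hx ⊢
    obtain ⟨m, _, hm⟩ := hx
    exact ⟨m, hm⟩
  have hTd : ∀ j k : Fin 3, j ≠ k →
      Disjoint (Set.Ico (0:ℝ) 1 \ ⋃ m ∈ 𝓛 j, I m) (Set.Ico (0:ℝ) 1 \ ⋃ m ∈ 𝓛 k, I m) := by
    intro j k hjk
    rw [Set.disjoint_left]
    intro x hxj hxk
    have hx01 : x ∈ Set.Ico (0:ℝ) 1 := hxj.1
    rw [← hIcover] at hx01
    obtain ⟨m, hm⟩ := Set.mem_iUnion.mp hx01
    have hmj : m ∉ 𝓛 j := fun hmem => hxj.2 (Set.mem_biUnion hmem hm)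
    have hmk : m ∉ 𝓛 k := fun hmem => hxk.2 (Set.mem_biUnion hmem hm)
    exact Finset.disjoint_left.mp (hcompl j k hjk)
      (Finset.mem_compl.mpr hmj) (Finset.mem_compl.mpr hmk)
  exact aux_main Λ κ hκ α (min (α 0) (min (α 1) (α 2))) hαm_le
    (fun k => ⋃ m ∈ 𝓛 k, I m) (fun k => Set.Ico (0:ℝ) 1 \ ⋃ m ∈ 𝓛 k, I m)
    hSmeas hTmeas hTd
    (fun k => Set.union_diff_cancel (hSsub k))
    I (fun k => (hI k).measurableSet)
    (fun k => fun x hx => Set.mem_biUnion (h𝓛 k) hx)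
    (fun k => disjoint_sdiff_self_right)
    hRS c hc g hg
end
end
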